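/- Let f : ℝ³ → ℂ be twice continuously differentiable and compactly supported, and let v_f(t,x) := (1/4π) ∫_{S²} [ f(x+tω) + t ω·∇f(x+tω) ] dσ(ω) be the free cosine wave propagator applied to f. Then for every t > 0 and every x ∈ ℝ³, |v_f(t,x)| ≤ (1/2π) t^{−1} ∫_{ℝ³} |D²f(y)| dy, where |D²f(y)| denotes the operator norm of the Hessian of f at y; that is, the dispersive estimate ‖cos(t√(−Δ)) f‖_{L^∞_x} ≲ t^{−1} ‖D²f‖_{L¹} holds. -/

import Mathlib

set_option autoImplicit false

open MeasureTheory ENNReal Real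

noncomputable section

/-- `ℝ³` as a Euclidean space. -/
abbrev R3 : Type := EuclideanSpace ℝ (Fin 3)

/-- The surface measure on the unit sphere `S² ⊂ ℝ³`. -/
def sphereMeasure : Measure (Metric.sphere (0 : R3) 1) :=
  (volume : Measure R3).toSphere

/-- The free cosine wave propagator (Kirchhoff formula):
`v_f(t,x) = (1/4π) ∫_{S²} [f(x+tω) + t ω·∇f(x+tω)] dσ(ω)`. -/
def cosProp (f : R3 → ℂ) (t : ℝ) (x : R3) : ℂ :=
  (1 / (4 * π)) • ∫ ω : Metric.sphere (0 : R3) 1,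
    (f (x + t • (ω : R3)) + t • (fderiv ℝ f (x + t • (ω : R3))) (ω : R3)) ∂sphereMeasure

open Metric Set intervalIntegral

set_option maxHeartbeats 1000000

lemma oneDim_bound (f : R3 → ℂ) (hf : ContDiff ℝ 2 f) (hsupp : HasCompactSupport f)
    {t : ℝ} (ht : 0 < t) (x ω : R3) (hω : ‖ω‖ = 1) :
    ‖f (x + t • ω) + t • (fderiv ℝ f (x + t • ω)) ω‖
      ≤ (2 / t) * ∫ r in Set.Ioi (0:ℝ), r ^ 2 * ‖fderiv ℝ (fderiv ℝ f) (x + r • ω)‖ := by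
  have hf1 : ContDiff ℝ 1 (fderiv ℝ f) := hf.fderiv_right (by norm_num)
  have hdf : Differentiable ℝ f := hf.differentiable (by norm_num)
  have hdg : Differentiable ℝ (fderiv ℝ f) := hf1.differentiable (by norm_num)
  have hcont2 : Continuous (fderiv ℝ (fderiv ℝ f)) :=
    (hf1.fderiv_right (m := 0) (by norm_num)).continuous
  obtain ⟨R, hR⟩ := hsupp.isBounded.subset_closedBall 0
  set b : ℝ := max t (‖x‖ + |R| + 1) with hbdef
  have htb : t ≤ b := le_max_left _ _
  have hb0 : 0 < b := lt_of_lt_of_le ht htb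
  -- vanishing outside
  have hvanish : ∀ r : ℝ, ‖x‖ + |R| + 1 ≤ |r| → x + r • ω ∉ tsupport f := by
    intro r hr hmem
    have h1 : ‖x + r • ω‖ ≤ |R| := by
      have := hR hmem
      simp only [mem_closedBall, dist_zero_right] at this
      exact this.trans (le_abs_self R)
    have h2 : |r| - ‖x‖ ≤ ‖x + r • ω‖ := by
      have h3 : ‖r • ω‖ ≤ ‖x + r • ω‖ + ‖x‖ := by
        calc ‖r • ω‖ = ‖x + r • ω - x‖ := by rw [add_sub_cancel_left]
        _ ≤ ‖x + r • ω‖ + ‖x‖ := norm_sub_le _ _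
      have h4 : ‖r • ω‖ = |r| := by rw [norm_smul, hω, Real.norm_eq_abs, mul_one]
      linarith
    linarith
  have hvan2 : ∀ r : ℝ, ‖x‖ + |R| + 1 ≤ |r| → fderiv ℝ (fderiv ℝ f) (x + r • ω) = 0 := by
    intro r hr
    by_contra h
    exact hvanish r hr (tsupport_fderiv_subset ℝ (tsupport_fderiv_subset ℝ
      (subset_closure (by exact h))))
  have hvan1 : ∀ r : ℝ, ‖x‖ + |R| + 1 ≤ |r| → fderiv ℝ f (x + r • ω) = 0 := by
    intro r hr
    by_contra h
    exact hvanish r hr (tsupport_fderiv_subset ℝ (subset_closure (by exact h)))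
  have hvan0 : ∀ r : ℝ, ‖x‖ + |R| + 1 ≤ |r| → f (x + r • ω) = 0 := by
    intro r hr
    exact image_eq_zero_of_notMem_tsupport (hvanish r hr)
  have hbb : ‖x‖ + |R| + 1 ≤ |b| := by
    rw [abs_of_pos hb0]
    exact le_max_right _ _
  -- the curves
  set φ : ℝ → ℂ := fun r => f (x + r • ω) with hφdef
  set ψ : ℝ → ℂ := fun r => (fderiv ℝ f (x + r • ω)) ω with hψdef
  set ρ : ℝ → ℂ := fun r => ((fderiv ℝ (fderiv ℝ f) (x + r • ω)) ω) ω with hρdef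
  set χ : ℝ → ℝ := fun r => ‖fderiv ℝ (fderiv ℝ f) (x + r • ω)‖ with hχdef
  have hc : ∀ r : ℝ, HasDerivAt (fun s : ℝ => x + s • ω) ω r := fun r => by
    simpa using ((hasDerivAt_id r).smul_const ω).const_add x
  have hline : Continuous (fun s : ℝ => x + s • ω) := by continuity
  have hφd : ∀ r : ℝ, HasDerivAt φ (ψ r) r := fun r =>
    (hdf _).hasFDerivAt.comp_hasDerivAt r (hc r)
  have hψd : ∀ r : ℝ, HasDerivAt ψ (ρ r) r := by
    intro r
    have h1 : HasDerivAt (fun s => fderiv ℝ f (x + s • ω))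
        ((fderiv ℝ (fderiv ℝ f) (x + r • ω)) ω) r :=
      (hdg _).hasFDerivAt.comp_hasDerivAt r (hc r)
    exact (ContinuousLinearMap.apply ℝ ℂ ω).hasFDerivAt.comp_hasDerivAt r h1
  have hψc : Continuous ψ := (hf1.continuous.comp hline).clm_apply continuous_const
  have hρc : Continuous ρ :=
    (((hcont2.comp hline).clm_apply continuous_const).clm_apply continuous_const)
  have hχc : Continuous χ := (hcont2.comp hline).norm (E := R3 →L[ℝ] R3 →L[ℝ] ℂ)
  have hρle : ∀ r : ℝ, ‖ρ r‖ ≤ χ r := by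
    intro r
    calc ‖ρ r‖ ≤ ‖(fderiv ℝ (fderiv ℝ f) (x + r • ω)) ω‖ * ‖ω‖ :=
          ContinuousLinearMap.le_opNorm _ _
    _ ≤ (‖fderiv ℝ (fderiv ℝ f) (x + r • ω)‖ * ‖ω‖) * ‖ω‖ := by
        gcongr; exact ContinuousLinearMap.le_opNorm _ _
    _ = χ r := by rw [hω]; ring
  -- FTC
  have hψb : ψ b = 0 := by rw [hψdef]; simp [hvan1 b hbb]
  have hφb : φ b = 0 := by rw [hφdef]; simp [hvan0 b hbb]
  have FTC1 : φ t = -∫ s in t..b, ψ s := by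
    have := intervalIntegral.integral_eq_sub_of_hasDerivAt (f := φ)
      (fun s _ => hφd s) (hψc.intervalIntegrable t b)
    rw [this, hφb]; ring
  have FTC2 : ∀ s : ℝ, ψ s = -∫ r in s..b, ρ r := by
    intro s
    have := intervalIntegral.integral_eq_sub_of_hasDerivAt (f := ψ)
      (fun r _ => hψd r) (hρc.intervalIntegrable s b)
    rw [this, hψb]; ring
  set A : ℝ := ∫ r in t..b, r ^ 2 * χ r with hAdef
  have hχ0 : ∀ r, 0 ≤ χ r := fun r => norm_nonneg (E := R3 →L[ℝ] R3 →L[ℝ] ℂ) _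
  have hA0 : 0 ≤ A := intervalIntegral.integral_nonneg htb
    (fun u _ => mul_nonneg (sq_nonneg u) (hχ0 u))
  have hInt2 : ∀ u v : ℝ, IntervalIntegrable (fun r => r ^ 2 * χ r) volume u v :=
    fun u v => ((continuous_pow 2).mul hχc).intervalIntegrable u v
  -- key pointwise bound for ψ on [t, b]
  have hψbd : ∀ s : ℝ, s ∈ Icc t b → ‖ψ s‖ ≤ (s ^ 2)⁻¹ * A := by
    intro s hs
    have hs0 : 0 < s := lt_of_lt_of_le ht hs.1
    calc ‖ψ s‖ = ‖∫ r in s..b, ρ r‖ := by rw [FTC2 s, norm_neg]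
    _ ≤ ∫ r in s..b, ‖ρ r‖ := intervalIntegral.norm_integral_le_integral_norm hs.2
    _ ≤ ∫ r in s..b, (s ^ 2)⁻¹ * (r ^ 2 * χ r) := by
        apply intervalIntegral.integral_mono_on hs.2
          (hρc.norm.intervalIntegrable s b)
          ((continuous_const.mul ((continuous_pow 2).mul hχc)).intervalIntegrable s b)
        intro r hr
        have hr0 : 0 < r := lt_of_lt_of_le hs0 hr.1
        have h1 : χ r ≤ (s ^ 2)⁻¹ * (r ^ 2 * χ r) := by
          rw [← mul_assoc]
          have h5 : (1:ℝ) ≤ (s ^ 2)⁻¹ * r ^ 2 := by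
            rw [inv_mul_eq_div, le_div_iff₀ (by positivity)]
            rw [one_mul]
            exact pow_le_pow_left₀ hs0.le hr.1 2
          calc χ r = 1 * χ r := (one_mul _).symm
          _ ≤ (s ^ 2)⁻¹ * r ^ 2 * χ r := mul_le_mul_of_nonneg_right h5 (hχ0 r)
        exact (hρle r).trans h1
    _ = (s ^ 2)⁻¹ * ∫ r in s..b, r ^ 2 * χ r := intervalIntegral.integral_const_mul _ _
    _ ≤ (s ^ 2)⁻¹ * A := by
        apply mul_le_mul_of_nonneg_left _ (by positivity)
        apply intervalIntegral.integral_mono_interval hs.1 hs.2 le_rfl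
        · filter_upwards [ae_restrict_mem measurableSet_Ioc] with r hr
          exact mul_nonneg (sq_nonneg r) (hχ0 r)
        · exact hInt2 t b
  -- bound for φ t
  have hinvsq : IntervalIntegrable (fun s : ℝ => (s ^ 2)⁻¹ * A) volume t b := by
    apply ContinuousOn.intervalIntegrable
    apply ContinuousOn.mul _ continuousOn_const
    apply ContinuousOn.inv₀ ((continuous_pow 2).continuousOn)
    intro s hs
    rw [uIcc_of_le htb] at hs
    have : 0 < s := lt_of_lt_of_le ht hs.1
    positivity
  have hinvsq_int : ∫ s in t..b, (s ^ 2)⁻¹ = t⁻¹ - b⁻¹ := by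
    have : ∀ s ∈ uIcc t b, HasDerivAt (fun u : ℝ => -u⁻¹) ((s ^ 2)⁻¹) s := by
      intro s hs
      rw [uIcc_of_le htb] at hs
      have hs0 : s ≠ 0 := ne_of_gt (lt_of_lt_of_le ht hs.1)
      have h := (hasDerivAt_inv hs0).neg; rw [neg_neg] at h; exact h
    have := intervalIntegral.integral_eq_sub_of_hasDerivAt this
      (by
        apply ContinuousOn.intervalIntegrable
        apply ContinuousOn.inv₀ ((continuous_pow 2).continuousOn)
        intro s hs
        rw [uIcc_of_le htb] at hs
        have : 0 < s := lt_of_lt_of_le ht hs.1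
        positivity)
    rw [this]; ring
  have hφbd : ‖φ t‖ ≤ t⁻¹ * A := by
    calc ‖φ t‖ = ‖∫ s in t..b, ψ s‖ := by rw [FTC1, norm_neg]
    _ ≤ ∫ s in t..b, ‖ψ s‖ := intervalIntegral.norm_integral_le_integral_norm htb
    _ ≤ ∫ s in t..b, (s ^ 2)⁻¹ * A :=
        intervalIntegral.integral_mono_on htb (hψc.norm.intervalIntegrable t b) hinvsq hψbd
    _ = (t⁻¹ - b⁻¹) * A := by
        rw [intervalIntegral.integral_mul_const, hinvsq_int]
    _ ≤ t⁻¹ * A := by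
        apply mul_le_mul_of_nonneg_right _ hA0
        have : 0 ≤ b⁻¹ := by positivity
        linarith
  have hψtb : ‖ψ t‖ ≤ (t ^ 2)⁻¹ * A := hψbd t ⟨le_rfl, htb⟩
  -- A ≤ integral over Ioi 0
  have hζ : HasCompactSupport (fun r : ℝ => r ^ 2 * χ r) := by
    apply HasCompactSupport.intro (isCompact_Icc (a := -b) (b := b))
    intro r hr
    have : ‖x‖ + |R| + 1 ≤ |r| := by
      simp only [mem_Icc, not_and_or, not_le] at hr
      rcases hr with h | h
      · calc ‖x‖ + |R| + 1 ≤ b := le_max_right _ _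
        _ ≤ -r := by linarith
        _ ≤ |r| := neg_le_abs r
      · calc ‖x‖ + |R| + 1 ≤ b := le_max_right _ _
        _ ≤ r := h.le
        _ ≤ |r| := le_abs_self r
    rw [hχdef]
    simp [hvan2 r this, norm_zero (E := R3 →L[ℝ] R3 →L[ℝ] ℂ)]
  have hζint : IntegrableOn (fun r : ℝ => r ^ 2 * χ r) (Set.Ioi (0:ℝ)) volume :=
    (((continuous_pow 2).mul hχc).integrable_of_hasCompactSupport hζ).integrableOn
  have hAle : A ≤ ∫ r in Set.Ioi (0:ℝ), r ^ 2 * χ r := by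
    rw [hAdef, intervalIntegral.integral_of_le htb]
    apply setIntegral_mono_set hζint
    · filter_upwards [ae_restrict_mem measurableSet_Ioi] with r _
      exact mul_nonneg (sq_nonneg r) (hχ0 r)
    · exact HasSubset.Subset.eventuallyLE (Ioc_subset_Ioi_self.trans (Ioi_subset_Ioi ht.le))
  -- combine
  calc ‖f (x + t • ω) + t • (fderiv ℝ f (x + t • ω)) ω‖
      ≤ ‖φ t‖ + ‖t • ψ t‖ := norm_add_le _ _
  _ ≤ t⁻¹ * A + t * ((t ^ 2)⁻¹ * A) := by
      apply add_le_add hφbd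
      rw [norm_smul, Real.norm_eq_abs, abs_of_pos ht]
      exact mul_le_mul_of_nonneg_left hψtb ht.le
  _ = (2 / t) * A := by field_simp; ring
  _ ≤ (2 / t) * ∫ r in Set.Ioi (0:ℝ), r ^ 2 * χ r := by
      apply mul_le_mul_of_nonneg_left hAle (by positivity)

lemma finrankR3 : Module.finrank ℝ R3 - 1 = 2 := by
  simp [finrank_euclideanSpace_fin]

lemma intVolumeIoiPow (h : ℝ → ℝ) :
    ∫ r : Set.Ioi (0:ℝ), h r ∂(Measure.volumeIoiPow 2)
      = ∫ r in Set.Ioi (0:ℝ), r ^ 2 * h r := by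
  simp only [Measure.volumeIoiPow, ENNReal.ofReal]
  rw [integral_withDensity_eq_integral_smul
    ((measurable_subtype_coe.pow_const _).real_toNNReal) (fun r : Set.Ioi (0:ℝ) => h r),
    integral_subtype_comap measurableSet_Ioi (fun a : ℝ => Real.toNNReal (a ^ 2) • h a)]
  refine setIntegral_congr_fun measurableSet_Ioi fun r hr => ?_
  rw [NNReal.smul_def, Real.coe_toNNReal _ (pow_nonneg hr.out.le _), smul_eq_mul]

lemma sphere_polar (g : R3 → ℝ) (hgc : Continuous g) (hgs : HasCompactSupport g) :
    ((∫ ω : Metric.sphere (0:R3) 1,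
        (∫ r in Set.Ioi (0:ℝ), r ^ 2 * g (r • (ω : R3))) ∂sphereMeasure) = ∫ y : R3, g y)
    ∧ Integrable (fun ω : Metric.sphere (0:R3) 1 =>
        ∫ r in Set.Ioi (0:ℝ), r ^ 2 * g (r • (ω : R3))) sphereMeasure := by
  have hg : Integrable g := hgc.integrable_of_hasCompactSupport hgs
  have MP := (volume : Measure R3).measurePreserving_homeomorphUnitSphereProd
  rw [finrankR3] at MP
  set F : Metric.sphere (0:R3) 1 × Set.Ioi (0:ℝ) → ℝ :=
    fun p => g ((p.2 : ℝ) • (p.1 : R3)) with hFdef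
  have hF_comp : ∀ z : ({0}ᶜ : Set R3), F (homeomorphUnitSphereProd R3 z) = g z := by
    intro z
    have hz : (z : R3) ≠ 0 := z.2
    simp only [hFdef, homeomorphUnitSphereProd_apply_snd_coe,
      homeomorphUnitSphereProd_apply_fst_coe]
    rw [smul_inv_smul₀ (norm_ne_zero_iff.2 hz)]
  have hgz : Integrable (fun z : ({0}ᶜ : Set R3) => g z)
      ((volume : Measure R3).comap Subtype.val) := by
    have hs := (measurableSet_singleton (0:R3)).compl
    have h2 : IntegrableOn g ({(0:R3)}ᶜ) volume := hg.integrableOn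
    rwa [IntegrableOn, ← map_comap_subtype_coe hs,
      (MeasurableEmbedding.subtype_coe hs).integrable_map_iff] at h2
  have hF_int : Integrable F ((volume : Measure R3).toSphere.prod (Measure.volumeIoiPow 2)) := by
    rw [← MP.integrable_comp_emb (Homeomorph.measurableEmbedding _)]
    exact (integrable_congr (Filter.Eventually.of_forall hF_comp)).mpr hgz
  have step1 : ∫ y : R3, g y = ∫ p, F p
      ∂((volume : Measure R3).toSphere.prod (Measure.volumeIoiPow 2)) := by
    rw [← MP.integral_comp (Homeomorph.measurableEmbedding _) F]
    rw [integral_congr_ae (Filter.Eventually.of_forall hF_comp)]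
    rw [integral_subtype_comap (measurableSet_singleton (0:R3)).compl g,
      restrict_compl_singleton]

  have step2 : ∫ p, F p ∂((volume : Measure R3).toSphere.prod (Measure.volumeIoiPow 2))
      = ∫ ω : Metric.sphere (0:R3) 1,
          (∫ r : Set.Ioi (0:ℝ), F (ω, r) ∂(Measure.volumeIoiPow 2))
          ∂(volume : Measure R3).toSphere := integral_prod F hF_int
  have step3 : ∀ ω : Metric.sphere (0:R3) 1,
      (∫ r : Set.Ioi (0:ℝ), F (ω, r) ∂(Measure.volumeIoiPow 2))
        = ∫ r in Set.Ioi (0:ℝ), r ^ 2 * g (r • (ω : R3)) := fun ω =>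
    intVolumeIoiPow (fun r => g (r • (ω : R3)))
  constructor
  · rw [show sphereMeasure = (volume : Measure R3).toSphere from rfl]
    rw [← integral_congr_ae (Filter.Eventually.of_forall step3), ← step2, ← step1]
  · have := hF_int.integral_prod_left
    exact (this.congr (Filter.Eventually.of_forall fun ω => (step3 ω))).congr
      (Filter.Eventually.of_forall fun ω => rfl)

theorem cosine_dispersive_estimate (f : R3 → ℂ) (hf : ContDiff ℝ 2 f)
    (hsupp : HasCompactSupport f) :
    ∀ t : ℝ, 0 < t → ∀ x : R3,
      ‖cosProp f t x‖ ≤ (1 / (2 * π)) * t⁻¹ * ∫ y : R3, ‖fderiv ℝ (fderiv ℝ f) y‖ := by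
  intro t ht x
  have hf1 : ContDiff ℝ 1 (fderiv ℝ f) := hf.fderiv_right (by norm_num)
  have hcont2 : Continuous (fderiv ℝ (fderiv ℝ f)) :=
    (hf1.fderiv_right (m := 0) (by norm_num)).continuous
  set g : R3 → ℝ := fun y => ‖fderiv ℝ (fderiv ℝ f) (x + y)‖ with hgdef
  have hgc : Continuous g := (hcont2.comp (continuous_const.add continuous_id)).norm (E := R3 →L[ℝ] R3 →L[ℝ] ℂ)
  have hgs : HasCompactSupport g := by
    apply HasCompactSupport.intro (hsupp.image (continuous_id.sub continuous_const)
      : IsCompact ((fun z => z - x) '' tsupport f))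
    intro y hy
    have hxy : x + y ∉ tsupport f := by
      intro hmem
      exact hy ⟨x + y, hmem, add_sub_cancel_left x y⟩
    have : fderiv ℝ (fderiv ℝ f) (x + y) = 0 := by
      by_contra h
      exact hxy (tsupport_fderiv_subset ℝ (tsupport_fderiv_subset ℝ (subset_closure h)))
    simp [hgdef, this, norm_zero (E := R3 →L[ℝ] R3 →L[ℝ] ℂ)]
  obtain ⟨hpolar, hBint⟩ := sphere_polar g hgc hgs
  have key : ∀ ω : Metric.sphere (0:R3) 1,
      ‖f (x + t • (ω : R3)) + t • (fderiv ℝ f (x + t • (ω : R3))) (ω : R3)‖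
        ≤ (2 / t) * ∫ r in Set.Ioi (0:ℝ), r ^ 2 * g (r • (ω : R3)) := by
    intro ω
    exact oneDim_bound f hf hsupp ht x ω (mem_sphere_zero_iff_norm.mp ω.2)
  have hπ : (0:ℝ) < π := Real.pi_pos
  have h4π : (0:ℝ) ≤ 1 / (4 * π) := by positivity
  have htrans : ∫ y : R3, g y = ∫ y : R3, ‖fderiv ℝ (fderiv ℝ f) y‖ :=
    integral_add_left_eq_self (μ := (volume : Measure R3)) (fun y => ‖fderiv ℝ (fderiv ℝ f) y‖) x
  have hnn : 0 ≤ ∫ y : R3, ‖fderiv ℝ (fderiv ℝ f) y‖ :=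
    integral_nonneg fun y => norm_nonneg (E := R3 →L[ℝ] R3 →L[ℝ] ℂ) _
  calc ‖cosProp f t x‖
      = (1 / (4 * π)) * ‖∫ ω : Metric.sphere (0:R3) 1,
          (f (x + t • (ω : R3)) + t • (fderiv ℝ f (x + t • (ω : R3))) (ω : R3))
          ∂sphereMeasure‖ := by
        rw [cosProp, norm_smul, Real.norm_eq_abs, abs_of_nonneg h4π]
  _ ≤ (1 / (4 * π)) * ∫ ω : Metric.sphere (0:R3) 1,
        ‖f (x + t • (ω : R3)) + t • (fderiv ℝ f (x + t • (ω : R3))) (ω : R3)‖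
        ∂sphereMeasure := by
      exact mul_le_mul_of_nonneg_left (norm_integral_le_integral_norm _) h4π
  _ ≤ (1 / (4 * π)) * ∫ ω : Metric.sphere (0:R3) 1,
        ((2 / t) * ∫ r in Set.Ioi (0:ℝ), r ^ 2 * g (r • (ω : R3))) ∂sphereMeasure := by
      apply mul_le_mul_of_nonneg_left _ h4π
      apply integral_mono_of_nonneg (Filter.Eventually.of_forall fun ω => norm_nonneg _)
        (hBint.const_mul (2 / t)) (Filter.Eventually.of_forall key)
  _ = (1 / (4 * π)) * ((2 / t) * ∫ ω : Metric.sphere (0:R3) 1,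
        (∫ r in Set.Ioi (0:ℝ), r ^ 2 * g (r • (ω : R3))) ∂sphereMeasure) := by
      rw [MeasureTheory.integral_const_mul]
  _ = (1 / (4 * π)) * ((2 / t) * ∫ y : R3, ‖fderiv ℝ (fderiv ℝ f) y‖) := by
      rw [hpolar, htrans]
  _ = (1 / (2 * π)) * t⁻¹ * ∫ y : R3, ‖fderiv ℝ (fderiv ℝ f) y‖ := by
      field_simp
      ring
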